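/- Let Z = (Z_k)_{k≥0} be a nested family of normed spaces over K in which every embedding Z_k ⊆ Z_{k+1} is compact (i.e., every bounded sequence in Z_k has a subsequence converging in the norm of Z_{k+1}). Then every sequence in Z_0 that converges in the norm of Z_0 has a subsequence that possesses a strict expansion in Z. -/
import Mathlib


open Filter

section ExpansionDefs

variable (𝕜 : Type*) [RCLike 𝕜] {E : Type*} [AddCommGroup E] [Module 𝕜 E]

/-- The set `S ⊆ E`, equipped with the norm function `nrm`, is a normed space over `𝕜`. -/
def IsNormedSubspace (S : Set E) (nrm : E → ℝ) : Prop :=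
  (0 : E) ∈ S ∧ (∀ x ∈ S, ∀ y ∈ S, x + y ∈ S) ∧ (∀ c : 𝕜, ∀ x ∈ S, c • x ∈ S) ∧
    (∀ x ∈ S, 0 ≤ nrm x) ∧ (∀ x ∈ S, (nrm x = 0 ↔ x = 0)) ∧
    (∀ x ∈ S, ∀ y ∈ S, nrm (x + y) ≤ nrm x + nrm y) ∧
    ∀ c : 𝕜, ∀ x ∈ S, nrm (c • x) = ‖c‖ * nrm x

/-- `Z` together with the norms `nrm` is a nested family
`Z₀ ⊆ Z₁ ⊆ ⋯` of normed spaces over `𝕜` with continuous embeddings. -/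
def IsNestedFamily (Z : ℕ → Set E) (nrm : ℕ → E → ℝ) : Prop :=
  (∀ k, IsNormedSubspace 𝕜 (Z k) (nrm k)) ∧ (∀ k, Z k ⊆ Z (k + 1)) ∧
    ∀ k, ∃ C > 0, ∀ x ∈ Z k, nrm (k + 1) x ≤ C * nrm k x

/-- Every embedding `Z k ⊆ Z (k+1)` is compact: every bounded sequence in `Z k`
has a subsequence converging, in the norm of `Z (k+1)`, to an element of `Z (k+1)`. -/
def HasCompactEmbeddings {E : Type*} [AddCommGroup E] (Z : ℕ → Set E) (nrm : ℕ → E → ℝ) :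
    Prop :=
  ∀ (k : ℕ) (u : ℕ → E), (∀ n, u n ∈ Z k) → (∃ M, ∀ n, nrm k (u n) ≤ M) →
    ∃ ψ : ℕ → ℕ, StrictMono ψ ∧
      ∃ x ∈ Z (k + 1), Tendsto (fun n => nrm (k + 1) (u (ψ n) - x)) atTop (nhds 0)

/-- The partial sum `∑_{j=1}^m Γ_{j,n} w_j` (real coefficients acting through `𝕜`). -/
noncomputable def expPartialSum (w : ℕ → E) (Γ : ℕ → ℕ → ℝ) (m n : ℕ) : E :=
  ∑ j ∈ Finset.Icc 1 m, algebraMap ℝ 𝕜 (Γ j n) • w j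

/-- Case (I) of a strict expansion: the trivial expansion. -/
def StrictCaseI {E : Type*} [AddCommGroup E] (Z : ℕ → Set E) (v : ℕ → E) (c : E) : Prop :=
  c ∈ Z 0 ∧ ∀ n, v n = c

/-- Case (II) of a strict expansion: a finite expansion with `K0 ≥ 1` terms. -/
def StrictCaseII (Z : ℕ → Set E) (nrm : ℕ → E → ℝ) (v : ℕ → E) (c : E) (K0 : ℕ)
    (w : ℕ → E) (wn : ℕ → ℕ → E) (Γ : ℕ → ℕ → ℝ) : Prop :=
  1 ≤ K0 ∧ c ∈ Z 0 ∧
    (∀ k, 1 ≤ k → k ≤ K0 → w k ∈ Z k) ∧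
    (∀ k, 1 ≤ k → k ≤ K0 → ∀ n, wn k n ∈ Z (k - 1)) ∧
    (∀ k, 1 ≤ k → k ≤ K0 → ∀ n, 0 < Γ k n) ∧
    Tendsto (fun n => Γ 1 n) atTop (nhds 0) ∧
    (∀ k, 1 ≤ k → k < K0 → Tendsto (fun n => Γ (k + 1) n / Γ k n) atTop (nhds 0)) ∧
    (∀ k, 1 ≤ k → k ≤ K0 → Tendsto (fun n => nrm k (wn k n - w k)) atTop (nhds 0)) ∧
    (∀ k, 1 ≤ k → k ≤ K0 → ∀ n, nrm (k - 1) (wn k n) = 1) ∧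
    (∀ k, 1 ≤ k → k ≤ K0 → ∀ n,
      v n = c + expPartialSum 𝕜 w Γ (k - 1) n + algebraMap ℝ 𝕜 (Γ k n) • wn k n) ∧
    ∀ n, wn K0 n = w K0

/-- Case (III) of a strict expansion: an infinite expansion. -/
def StrictCaseIII (Z : ℕ → Set E) (nrm : ℕ → E → ℝ) (v : ℕ → E) (c : E)
    (w : ℕ → E) (wn : ℕ → ℕ → E) (Γ : ℕ → ℕ → ℝ) (Nk : ℕ → ℕ) : Prop :=
  c ∈ Z 0 ∧
    (∀ k, 1 ≤ k → w k ∈ Z k) ∧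
    (∀ k, 1 ≤ k → ∀ n, wn k n ∈ Z (k - 1)) ∧
    (∀ k, 1 ≤ k → ∀ n, 0 < Γ k n) ∧
    (∀ k, 1 ≤ k → 1 ≤ Nk k) ∧
    Tendsto (fun n => Γ 1 n) atTop (nhds 0) ∧
    (∀ k, 1 ≤ k → Tendsto (fun n => Γ (k + 1) n / Γ k n) atTop (nhds 0)) ∧
    (∀ k, 1 ≤ k → Tendsto (fun n => nrm k (wn k n - w k)) atTop (nhds 0)) ∧
    (∀ k, 1 ≤ k → ∀ n,
      v n = c + expPartialSum 𝕜 w Γ (k - 1) n + algebraMap ℝ 𝕜 (Γ k n) • wn k n) ∧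
    ∀ k, 1 ≤ k → ∀ n, Nk k ≤ n → nrm (k - 1) (wn k n) = 1

/-- The strict expansion `v_n ≈ c + ∑_{k ∈ N} Γ_{k,n} w_k` with explicit data:
the index set `N` is `∅` in case (I), `{1, …, K0}` in case (II) and `{k | k ≥ 1}`
in case (III). -/
def StrictExpansionWith (Z : ℕ → Set E) (nrm : ℕ → E → ℝ) (v : ℕ → E) (c : E) (N : Set ℕ)
    (w : ℕ → E) (wn : ℕ → ℕ → E) (Γ : ℕ → ℕ → ℝ) (Nk : ℕ → ℕ) : Prop :=
  (N = ∅ ∧ StrictCaseI Z v c) ∨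
    (∃ K0 : ℕ, N = Set.Icc 1 K0 ∧ StrictCaseII 𝕜 Z nrm v c K0 w wn Γ) ∨
    (N = {k : ℕ | 1 ≤ k} ∧ StrictCaseIII 𝕜 Z nrm v c w wn Γ Nk)

/-- `v` possesses a strict expansion in the nested family `(Z, nrm)`. -/
def HasStrictExpansion (Z : ℕ → Set E) (nrm : ℕ → E → ℝ) (v : ℕ → E) : Prop :=
  ∃ (c : E) (N : Set ℕ) (w : ℕ → E) (wn : ℕ → ℕ → E) (Γ : ℕ → ℕ → ℝ) (Nk : ℕ → ℕ),
    StrictExpansionWith 𝕜 Z nrm v c N w wn Γ Nk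

/-- Case (II) of a relaxed expansion: unit-norm conditions dropped, `w K0 ≠ 0` required. -/
def RelaxedCaseII (Z : ℕ → Set E) (nrm : ℕ → E → ℝ) (v : ℕ → E) (c : E) (K0 : ℕ)
    (w : ℕ → E) (wn : ℕ → ℕ → E) (Γ : ℕ → ℕ → ℝ) : Prop :=
  1 ≤ K0 ∧ c ∈ Z 0 ∧
    (∀ k, 1 ≤ k → k ≤ K0 → w k ∈ Z k) ∧
    (∀ k, 1 ≤ k → k ≤ K0 → ∀ n, wn k n ∈ Z (k - 1)) ∧
    (∀ k, 1 ≤ k → k ≤ K0 → ∀ n, 0 < Γ k n) ∧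
    Tendsto (fun n => Γ 1 n) atTop (nhds 0) ∧
    (∀ k, 1 ≤ k → k < K0 → Tendsto (fun n => Γ (k + 1) n / Γ k n) atTop (nhds 0)) ∧
    (∀ k, 1 ≤ k → k ≤ K0 → Tendsto (fun n => nrm k (wn k n - w k)) atTop (nhds 0)) ∧
    (∀ k, 1 ≤ k → k ≤ K0 → ∀ n,
      v n = c + expPartialSum 𝕜 w Γ (k - 1) n + algebraMap ℝ 𝕜 (Γ k n) • wn k n) ∧
    (∀ n, wn K0 n = w K0) ∧ w K0 ≠ 0

/-- Case (III) of a relaxed expansion: unit-norm conditions dropped. -/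
def RelaxedCaseIII (Z : ℕ → Set E) (nrm : ℕ → E → ℝ) (v : ℕ → E) (c : E)
    (w : ℕ → E) (wn : ℕ → ℕ → E) (Γ : ℕ → ℕ → ℝ) : Prop :=
  c ∈ Z 0 ∧
    (∀ k, 1 ≤ k → w k ∈ Z k) ∧
    (∀ k, 1 ≤ k → ∀ n, wn k n ∈ Z (k - 1)) ∧
    (∀ k, 1 ≤ k → ∀ n, 0 < Γ k n) ∧
    Tendsto (fun n => Γ 1 n) atTop (nhds 0) ∧
    (∀ k, 1 ≤ k → Tendsto (fun n => Γ (k + 1) n / Γ k n) atTop (nhds 0)) ∧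
    (∀ k, 1 ≤ k → Tendsto (fun n => nrm k (wn k n - w k)) atTop (nhds 0)) ∧
    ∀ k, 1 ≤ k → ∀ n,
      v n = c + expPartialSum 𝕜 w Γ (k - 1) n + algebraMap ℝ 𝕜 (Γ k n) • wn k n

/-- A relaxed expansion `v_n ≈ c + ∑_{k ∈ N} Γ_{k,n} w_k` with explicit data. -/
def RelaxedExpansionWith (Z : ℕ → Set E) (nrm : ℕ → E → ℝ) (v : ℕ → E) (c : E) (N : Set ℕ)
    (w : ℕ → E) (wn : ℕ → ℕ → E) (Γ : ℕ → ℕ → ℝ) : Prop :=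
  (N = ∅ ∧ StrictCaseI Z v c) ∨
    (∃ K0 : ℕ, N = Set.Icc 1 K0 ∧ RelaxedCaseII 𝕜 Z nrm v c K0 w wn Γ) ∨
    (N = {k : ℕ | 1 ≤ k} ∧ RelaxedCaseIII 𝕜 Z nrm v c w wn Γ)

/-- `v` has a unitary expansion with limit `c`: a relaxed expansion in which
`‖w_k‖_{Z_k} = 1` for every `k ∈ N`. -/
def UnitaryExpansionFrom (Z : ℕ → Set E) (nrm : ℕ → E → ℝ) (v : ℕ → E) (c : E) : Prop :=
  ∃ (N : Set ℕ) (w : ℕ → E) (wn : ℕ → ℕ → E) (Γ : ℕ → ℕ → ℝ),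
    RelaxedExpansionWith 𝕜 Z nrm v c N w wn Γ ∧ ∀ k ∈ N, nrm k (w k) = 1

/-- `v` has a degenerate expansion with limit `c`: an infinite relaxed expansion
in which either all `w_k = 0`, or `‖w_k‖_{Z_k} = 1` for `1 ≤ k ≤ N0` and `w_k = 0`
for `k > N0`. -/
def DegenerateExpansionFrom (Z : ℕ → Set E) (nrm : ℕ → E → ℝ) (v : ℕ → E) (c : E) : Prop :=
  ∃ (w : ℕ → E) (wn : ℕ → ℕ → E) (Γ : ℕ → ℕ → ℝ),
    RelaxedCaseIII 𝕜 Z nrm v c w wn Γ ∧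
      ((∀ k, 1 ≤ k → w k = 0) ∨
        ∃ N0 : ℕ, 1 ≤ N0 ∧ (∀ k, 1 ≤ k → k ≤ N0 → nrm k (w k) = 1) ∧ ∀ k, N0 < k → w k = 0)

end ExpansionDefs


section StrictProofAux

variable {𝕜 : Type*} [RCLike 𝕜] {E : Type*} [AddCommGroup E] [Module 𝕜 E]

namespace StrictAux

structure St (E : Type*) where
  phi : ℕ → ℕ
  R : ℕ → E
  w : E
  dead : Bool

variable (𝕜) in
/-- Specification of one step of the extraction process. -/
def Good (Z : ℕ → Set E) (nrm : ℕ → E → ℝ) (k : ℕ) (s s' : St E) : Prop :=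
  (s.dead = true ∧ s' = s) ∨
  (s.dead = false ∧
    (∃ g : ℕ → ℕ, StrictMono g ∧ s'.phi = s.phi ∘ g) ∧
    ((s'.dead = true ∧ s'.R = s.R ∧ ∀ m, s.R (s'.phi m) = 0) ∨
     (s'.dead = false ∧ s'.w ∈ Z (k + 1) ∧
       (∀ n, s'.R n = s.R n - algebraMap ℝ 𝕜 (nrm k (s.R n)) • s'.w) ∧
       (∀ m, s.R (s'.phi m) ≠ 0) ∧
       Tendsto (fun m => nrm (k + 1)
         (algebraMap ℝ 𝕜 ((nrm k (s.R (s'.phi m)))⁻¹) • s.R (s'.phi m) - s'.w))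
         atTop (nhds 0))))

variable (𝕜) in
open Classical in
noncomputable def mseq (Z : ℕ → Set E) (nrm : ℕ → E → ℝ) (v : ℕ → E) (L : E) : ℕ → St E
  | 0 => ⟨id, fun n => v n - L, 0, false⟩
  | k+1 => if h : ∃ s', Good 𝕜 Z nrm k (mseq Z nrm v L k) s' then h.choose
           else mseq Z nrm v L k

variable (𝕜) in
open Classical in
noncomputable def dsq (nrm : ℕ → E → ℝ) (w : ℕ → E) (b : ℕ → E) : ℕ → ℕ → E
  | 0, n => b n
  | k+1, n => dsq nrm w b k n -
      algebraMap ℝ 𝕜 (if dsq nrm w b k n = 0 then 1 else nrm k (dsq nrm w b k n)) • w (k+1)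

variable (𝕜) in
open Classical in
noncomputable def Γd (nrm : ℕ → E → ℝ) (w : ℕ → E) (b : ℕ → E) (k n : ℕ) : ℝ :=
  if dsq 𝕜 nrm w b (k-1) n = 0 then 1 else nrm (k-1) (dsq 𝕜 nrm w b (k-1) n)

variable (𝕜) in
noncomputable def wnd (nrm : ℕ → E → ℝ) (w : ℕ → E) (b : ℕ → E) (k n : ℕ) : E :=
  algebraMap ℝ 𝕜 ((Γd 𝕜 nrm w b k n)⁻¹) • dsq 𝕜 nrm w b (k-1) n


variable {Z : ℕ → Set E} {nrm : ℕ → E → ℝ}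

section Subspace
variable (hfam : IsNestedFamily 𝕜 Z nrm)
include hfam

lemma zmem0 (k : ℕ) : (0 : E) ∈ Z k := (hfam.1 k).1

lemma zadd {k : ℕ} {x y : E} (hx : x ∈ Z k) (hy : y ∈ Z k) : x + y ∈ Z k :=
  (hfam.1 k).2.1 x hx y hy

lemma zsmul {k : ℕ} (c : 𝕜) {x : E} (hx : x ∈ Z k) : c • x ∈ Z k :=
  (hfam.1 k).2.2.1 c x hx

lemma zsub {k : ℕ} {x y : E} (hx : x ∈ Z k) (hy : y ∈ Z k) : x - y ∈ Z k := by
  have : x - y = x + (-1 : 𝕜) • y := by rw [neg_one_smul, sub_eq_add_neg]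
  rw [this]; exact zadd hfam hx (zsmul hfam _ hy)

lemma zmono {j k : ℕ} (h : j ≤ k) : Z j ⊆ Z k := by
  induction h with
  | refl => exact fun _ h => h
  | step _ ih => exact fun x hx => hfam.2.1 _ (ih hx)

lemma nrm_nonneg {k : ℕ} {x : E} (hx : x ∈ Z k) : 0 ≤ nrm k x := (hfam.1 k).2.2.2.1 x hx

lemma nrm_eq_zero {k : ℕ} {x : E} (hx : x ∈ Z k) : nrm k x = 0 ↔ x = 0 :=
  (hfam.1 k).2.2.2.2.1 x hx

lemma nrm_zero (k : ℕ) : nrm k (0 : E) = 0 := (nrm_eq_zero hfam (zmem0 hfam k)).2 rfl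

lemma nrm_pos {k : ℕ} {x : E} (hx : x ∈ Z k) (hx0 : x ≠ 0) : 0 < nrm k x :=
  lt_of_le_of_ne (nrm_nonneg hfam hx) (fun h => hx0 ((nrm_eq_zero hfam hx).1 h.symm))

lemma nrm_smul_real {k : ℕ} (r : ℝ) {x : E} (hx : x ∈ Z k) :
    nrm k (algebraMap ℝ 𝕜 r • x) = |r| * nrm k x := by
  rw [(hfam.1 k).2.2.2.2.2.2 (algebraMap ℝ 𝕜 r) x hx,
    show algebraMap ℝ 𝕜 r = (r : 𝕜) from rfl, RCLike.norm_ofReal]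

end Subspace

section GoodLemmas
variable {k : ℕ} {s s' : St E}

lemma Good.refine (h : Good 𝕜 Z nrm k s s') :
    ∃ g : ℕ → ℕ, (∀ m, m ≤ g m) ∧ s'.phi = s.phi ∘ g := by
  rcases h with ⟨_, rfl⟩ | ⟨_, ⟨g, hg, hphi⟩, _⟩
  · exact ⟨id, fun m => le_refl m, rfl⟩
  · exact ⟨g, fun m => hg.le_apply, hphi⟩

lemma Good.dead_of_dead (h : Good 𝕜 Z nrm k s s') (hd : s.dead = true) : s' = s := by
  rcases h with ⟨_, rfl⟩ | ⟨h1, _⟩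
  · rfl
  · rw [hd] at h1; exact absurd h1 (by simp)

lemma Good.alive_spec (h : Good 𝕜 Z nrm k s s') (h2 : s'.dead = false) :
    s.dead = false ∧ s'.w ∈ Z (k + 1) ∧
      (∀ n, s'.R n = s.R n - algebraMap ℝ 𝕜 (nrm k (s.R n)) • s'.w) ∧
      (∀ m, s.R (s'.phi m) ≠ 0) ∧
      Tendsto (fun m => nrm (k + 1)
        (algebraMap ℝ 𝕜 ((nrm k (s.R (s'.phi m)))⁻¹) • s.R (s'.phi m) - s'.w))
        atTop (nhds 0) := by
  rcases h with ⟨h1, rfl⟩ | ⟨h1, _, ⟨h2', _⟩ | hal⟩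
  · rw [h2] at h1; exact absurd h1 (by simp)
  · rw [h2] at h2'; exact absurd h2' (by simp)
  · exact ⟨h1, hal.2.1, hal.2.2.1, hal.2.2.2.1, hal.2.2.2.2⟩

lemma Good.death_spec (h : Good 𝕜 Z nrm k s s') (h1 : s.dead = false) (h2 : s'.dead = true) :
    s'.R = s.R ∧ ∀ m, s.R (s'.phi m) = 0 := by
  rcases h with ⟨h1', _⟩ | ⟨_, _, ⟨_, hr, hz⟩ | ⟨h2', _⟩⟩
  · rw [h1] at h1'; exact absurd h1' (by simp)
  · exact ⟨hr, hz⟩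
  · rw [h2] at h2'; exact absurd h2' (by simp)

end GoodLemmas

section Exists
variable (hfam : IsNestedFamily 𝕜 Z nrm) (hcomp : ∀ (k : ℕ) (u : ℕ → E),
    (∀ n, u n ∈ Z k) → (∃ M, ∀ n, nrm k (u n) ≤ M) →
    ∃ ψ : ℕ → ℕ, StrictMono ψ ∧
      ∃ x ∈ Z (k + 1), Tendsto (fun n => nrm (k + 1) (u (ψ n) - x)) atTop (nhds 0))
include hfam hcomp

omit hfam hcomp in
open Classical in
lemma mseq_succ (v : ℕ → E) (L : E) (k : ℕ) :
    mseq 𝕜 Z nrm v L (k + 1) =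
      if h : ∃ s', Good 𝕜 Z nrm k (mseq 𝕜 Z nrm v L k) s' then h.choose
      else mseq 𝕜 Z nrm v L k := rfl

lemma good_exists (k : ℕ) (s : St E) (hmem : ∀ n, s.R n ∈ Z k) :
    ∃ s', Good 𝕜 Z nrm k s s' := by
  by_cases hd : s.dead
  · exact ⟨s, Or.inl ⟨hd, rfl⟩⟩
  · rw [Bool.not_eq_true] at hd
    by_cases hinf : {m | s.R (s.phi m) = 0}.Infinite
    · refine ⟨⟨s.phi ∘ Nat.nth (fun m => s.R (s.phi m) = 0), s.R, s.w, true⟩,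
        Or.inr ⟨hd, ⟨Nat.nth _, Nat.nth_strictMono hinf, rfl⟩, Or.inl ⟨rfl, rfl, ?_⟩⟩⟩
      exact fun m => Nat.nth_mem_of_infinite hinf m
    · rw [Set.not_infinite] at hinf
      obtain ⟨b, hb⟩ := hinf.bddAbove
      set n0 := b + 1 with hn0
      have hnz : ∀ m, s.R (s.phi (m + n0)) ≠ 0 := by
        intro m hzero
        have := hb hzero
        omega
      set u : ℕ → E := fun m =>
        algebraMap ℝ 𝕜 ((nrm k (s.R (s.phi (m + n0))))⁻¹) • s.R (s.phi (m + n0)) with hu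
      have humem : ∀ m, u m ∈ Z k := fun m => zsmul hfam _ (hmem _)
      have hub : ∀ m, nrm k (u m) ≤ 1 := by
        intro m
        rw [hu]
        have hpos := nrm_pos hfam (hmem (s.phi (m + n0))) (hnz m)
        rw [nrm_smul_real hfam _ (hmem _), abs_of_pos (by positivity),
          inv_mul_cancel₀ (ne_of_gt hpos)]
      obtain ⟨σ, hσ, x, hx, hcv⟩ := hcomp k u humem ⟨1, hub⟩
      refine ⟨⟨fun m => s.phi (σ m + n0), fun n => s.R n - algebraMap ℝ 𝕜 (nrm k (s.R n)) • x,
        x, false⟩, Or.inr ⟨hd, ⟨fun m => σ m + n0, hσ.add_const n0, rfl⟩,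
          Or.inr ⟨rfl, hx, fun n => rfl, fun m => hnz (σ m), hcv⟩⟩⟩

lemma mseq_mem_good (v : ℕ → E) (L : E) (hv : ∀ n, v n ∈ Z 0) (hL : L ∈ Z 0) :
    ∀ k, (∀ n, (mseq 𝕜 Z nrm v L k).R n ∈ Z k) ∧
      Good 𝕜 Z nrm k (mseq 𝕜 Z nrm v L k) (mseq 𝕜 Z nrm v L (k + 1)) := by
  intro k
  induction k with
  | zero =>
    have hmem : ∀ n, (mseq 𝕜 Z nrm v L 0).R n ∈ Z 0 := fun n => zsub hfam (hv n) hL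
    refine ⟨hmem, ?_⟩
    have hex := good_exists (𝕜 := 𝕜) hfam hcomp 0 (mseq 𝕜 Z nrm v L 0) hmem
    rw [mseq_succ, dif_pos hex]
    exact hex.choose_spec
  | succ k ih =>
    obtain ⟨hmem, hgood⟩ := ih
    have hmem' : ∀ n, (mseq 𝕜 Z nrm v L (k+1)).R n ∈ Z (k+1) := by
      intro n
      rcases hgood with ⟨_, heq⟩ | ⟨_, _, ⟨_, hr, _⟩ | ⟨_, hw, hrec, _⟩⟩
      · rw [heq]; exact zmono hfam (Nat.le_succ k) (hmem n)
      · rw [hr]; exact zmono hfam (Nat.le_succ k) (hmem n)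
      · rw [hrec n]
        exact zsub hfam (zmono hfam (Nat.le_succ k) (hmem n)) (zsmul hfam _ hw)
    refine ⟨hmem', ?_⟩
    have hex := good_exists (𝕜 := 𝕜) hfam hcomp (k+1) (mseq 𝕜 Z nrm v L (k+1)) hmem'
    rw [mseq_succ v L (k+1), dif_pos hex]
    exact hex.choose_spec

end Exists

section Dsq
variable (hfam : IsNestedFamily 𝕜 Z nrm) (w : ℕ → E) (b : ℕ → E)

lemma dsq_succ (k n : ℕ) :
    dsq 𝕜 nrm w b (k + 1) n =
      dsq 𝕜 nrm w b k n - algebraMap ℝ 𝕜 (Γd 𝕜 nrm w b (k + 1) n) • w (k + 1) := rfl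

open Classical in
lemma Γd_def (k n : ℕ) :
    Γd 𝕜 nrm w b (k + 1) n =
      if dsq 𝕜 nrm w b k n = 0 then 1 else nrm k (dsq 𝕜 nrm w b k n) := rfl

include hfam

lemma dsq_mem (hb : ∀ n, b n ∈ Z 0) (k : ℕ) (hw : ∀ j, 1 ≤ j → j ≤ k → w j ∈ Z j) (n : ℕ) :
    dsq 𝕜 nrm w b k n ∈ Z k := by
  induction k with
  | zero => exact hb n
  | succ k ih =>
    rw [dsq_succ]
    refine zsub hfam (zmono hfam (Nat.le_succ k) (ih fun j h1 h2 => hw j h1 (h2.trans (Nat.le_succ k)))) ?_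
    exact zsmul hfam _ (hw (k+1) (Nat.le_add_left 1 k) le_rfl)

lemma Γd_pos (hb : ∀ n, b n ∈ Z 0) {k : ℕ} (hk : 1 ≤ k)
    (hw : ∀ j, 1 ≤ j → j ≤ k - 1 → w j ∈ Z j) (n : ℕ) : 0 < Γd 𝕜 nrm w b k n := by
  obtain ⟨k, rfl⟩ : ∃ k', k = k' + 1 := ⟨k - 1, by omega⟩
  rw [Γd_def]
  split
  · exact one_pos
  · exact nrm_pos hfam (dsq_mem hfam w b hb k (by simpa using hw) n) ‹_›

lemma smul_wnd (hb : ∀ n, b n ∈ Z 0) {k : ℕ} (hk : 1 ≤ k)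
    (hw : ∀ j, 1 ≤ j → j ≤ k - 1 → w j ∈ Z j) (n : ℕ) :
    algebraMap ℝ 𝕜 (Γd 𝕜 nrm w b k n) • wnd 𝕜 nrm w b k n = dsq 𝕜 nrm w b (k - 1) n := by
  rw [wnd, smul_smul, ← map_mul,
    mul_inv_cancel₀ (ne_of_gt (Γd_pos hfam w b hb hk hw n)), map_one, one_smul]

lemma wnd_mem (hb : ∀ n, b n ∈ Z 0) {k : ℕ}
    (hw : ∀ j, 1 ≤ j → j ≤ k - 1 → w j ∈ Z j) (n : ℕ) :
    wnd 𝕜 nrm w b k n ∈ Z (k - 1) :=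
  zsmul hfam _ (dsq_mem hfam w b hb (k-1) hw n)

lemma wnd_norm_one (hb : ∀ n, b n ∈ Z 0) {k : ℕ} (hk : 1 ≤ k)
    (hw : ∀ j, 1 ≤ j → j ≤ k - 1 → w j ∈ Z j) (n : ℕ)
    (hne : dsq 𝕜 nrm w b (k - 1) n ≠ 0) : nrm (k - 1) (wnd 𝕜 nrm w b k n) = 1 := by
  have hmem := dsq_mem hfam w b hb (k-1) hw n
  have hpos : 0 < Γd 𝕜 nrm w b k n := Γd_pos hfam w b hb hk hw n
  have hΓ : Γd 𝕜 nrm w b k n = nrm (k-1) (dsq 𝕜 nrm w b (k-1) n) := by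
    obtain ⟨k, rfl⟩ : ∃ k', k = k' + 1 := ⟨k - 1, by omega⟩
    rw [Γd_def, if_neg (by simpa using hne)]
    simp
  rw [wnd, nrm_smul_real hfam _ hmem, abs_of_pos (by positivity), ← hΓ,
    inv_mul_cancel₀ (ne_of_gt hpos)]

omit hfam in
lemma dsq_telescope (k n : ℕ) :
    b n = expPartialSum 𝕜 w (Γd 𝕜 nrm w b) k n + dsq 𝕜 nrm w b k n := by
  induction k with
  | zero => simp [expPartialSum, dsq]
  | succ k ih =>
    rw [expPartialSum, Finset.sum_Icc_succ_top (Nat.le_add_left 1 k), dsq_succ]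
    rw [expPartialSum] at ih
    rw [add_assoc] at *
    rw [add_sub_cancel]
    exact ih

lemma dsq_factor (hb : ∀ n, b n ∈ Z 0) {k : ℕ} (hk : 1 ≤ k)
    (hw : ∀ j, 1 ≤ j → j ≤ k - 1 → w j ∈ Z j) (n : ℕ) :
    dsq 𝕜 nrm w b k n =
      algebraMap ℝ 𝕜 (Γd 𝕜 nrm w b k n) • (wnd 𝕜 nrm w b k n - w k) := by
  obtain ⟨k', hk'⟩ : ∃ k', k = k' + 1 := ⟨k - 1, by omega⟩
  subst hk'
  rw [smul_sub, smul_wnd hfam w b hb hk hw n]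
  exact dsq_succ w b k' n

end Dsq

end StrictAux
end StrictProofAux

/-- every convergent sequence in `Z 0` of a nested family with compact
embeddings has a subsequence possessing a strict expansion in the family. -/
theorem strict_expansion_of_compact_embeddings
    (𝕜 : Type*) [RCLike 𝕜] {E : Type*} [AddCommGroup E] [Module 𝕜 E]
    (Z : ℕ → Set E) (nrm : ℕ → E → ℝ)
    (hfam : IsNestedFamily 𝕜 Z nrm) (hcomp : HasCompactEmbeddings Z nrm)
    (v : ℕ → E) (hv : ∀ n, v n ∈ Z 0)
    (hconv : ∃ L ∈ Z 0, Tendsto (fun n => nrm 0 (v n - L)) atTop (nhds 0)) :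
    ∃ ψ : ℕ → ℕ, StrictMono ψ ∧ HasStrictExpansion 𝕜 Z nrm (fun n => v (ψ n)) := by
  classical
  obtain ⟨L, hL, hvL⟩ := hconv
  set M : ℕ → StrictAux.St E := StrictAux.mseq 𝕜 Z nrm v L with hMdef
  have hMG := StrictAux.mseq_mem_good (𝕜 := 𝕜) hfam hcomp v L hv hL
  have hmem : ∀ k n, (M k).R n ∈ Z k := fun k => (hMG k).1
  have hgood : ∀ k, StrictAux.Good 𝕜 Z nrm k (M k) (M (k+1)) := fun k => (hMG k).2
  have hM0R : ∀ n, (M 0).R n = v n - L := fun n => rfl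
  have hM0d : (M 0).dead = false := rfl
  have hphiSM : ∀ k, StrictMono (M k).phi := by
    intro k
    induction k with
    | zero => exact strictMono_id
    | succ k ih =>
      rcases hgood k with ⟨_, heq⟩ | ⟨_, ⟨g, hg, hphi⟩, _⟩
      · rw [heq]; exact ih
      · rw [hphi]; exact ih.comp hg
  have hrefine : ∀ k l, k ≤ l → ∃ g : ℕ → ℕ, (∀ m, m ≤ g m) ∧ (M l).phi = (M k).phi ∘ g := by
    intro k l hkl
    induction l, hkl using Nat.le_induction with
    | base => exact ⟨id, fun m => le_rfl, rfl⟩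
    | succ l hkl ih =>
      obtain ⟨g, hg, hphi⟩ := ih
      obtain ⟨g', hg', hphi'⟩ := (hgood l).refine
      exact ⟨fun m => g (g' m), fun m => le_trans (hg' m) (hg (g' m)),
        by rw [hphi', hphi]; rfl⟩
  by_cases hal : ∀ k, (M k).dead = false
  · -- Case III: the process never terminates
    set ψ : ℕ → ℕ := fun n => (M (n+1)).phi n with hψdef
    have hψ : StrictMono ψ := by
      apply strictMono_nat_of_lt_succ
      intro n
      obtain ⟨g, hg, heq⟩ := hrefine (n+1) (n+2) (by omega)
      have h1 : ψ (n+1) = (M (n+1)).phi (g (n+1)) := congrFun heq (n+1)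
      have h2 : (M (n+1)).phi n < (M (n+1)).phi (n+1) := hphiSM (n+1) (by omega)
      have h3 : (M (n+1)).phi (n+1) ≤ (M (n+1)).phi (g (n+1)) :=
        (hphiSM (n+1)).monotone (hg (n+1))
      rw [h1]; exact lt_of_lt_of_le h2 h3
    set w : ℕ → E := fun j => (M j).w with hwdef
    set b : ℕ → E := fun n => v (ψ n) - L with hbdef
    have hb : ∀ n, b n ∈ Z 0 := fun n => StrictAux.zsub hfam (hv _) hL
    have hwmem : ∀ j, 1 ≤ j → w j ∈ Z j := by
      intro j hj
      obtain ⟨j', rfl⟩ : ∃ j', j = j' + 1 := ⟨j - 1, by omega⟩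
      exact ((hgood j').alive_spec (hal (j'+1))).2.1
    have hwmem' : ∀ k, ∀ j, 1 ≤ j → j ≤ k → w j ∈ Z j := fun k j h1 _ => hwmem j h1
    set Γ := StrictAux.Γd 𝕜 nrm w b with hΓdef
    set wn := StrictAux.wnd 𝕜 nrm w b with hwndef
    have hψmem : ∀ k n, k ≤ n + 1 → ∃ m, n ≤ m ∧ ψ n = (M k).phi m := by
      intro k n hkn
      obtain ⟨g, hg, heq⟩ := hrefine k (n+1) hkn
      exact ⟨g n, hg n, congrFun heq n⟩
    have hclaim : ∀ j n, j ≤ n →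
        StrictAux.dsq 𝕜 nrm w b j n = (M j).R (ψ n) ∧ (M j).R (ψ n) ≠ 0 := by
      intro j
      induction j with
      | zero =>
        intro n _
        have hnz := ((hgood 0).alive_spec (hal 1)).2.2.2.1
        obtain ⟨m, _, hm⟩ := hψmem 1 n (by omega)
        exact ⟨rfl, by rw [hm]; exact hnz m⟩
      | succ j ih =>
        intro n hn
        obtain ⟨hd, hne⟩ := ih n (by omega)
        have hrec := ((hgood j).alive_spec (hal (j+1))).2.2.1 (ψ n)
        have hΓd : StrictAux.Γd 𝕜 nrm w b (j+1) n = nrm j ((M j).R (ψ n)) := by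
          rw [StrictAux.Γd_def, hd, if_neg hne]
        have h1 : StrictAux.dsq 𝕜 nrm w b (j+1) n = (M (j+1)).R (ψ n) := by
          rw [StrictAux.dsq_succ, hΓd, hd, hrec]
        refine ⟨h1, ?_⟩
        have hnz := ((hgood (j+1)).alive_spec (hal (j+2))).2.2.2.1
        obtain ⟨m, _, hm⟩ := hψmem (j+2) n (by omega)
        rw [hm]; exact hnz m
    have hΓpos : ∀ k, 1 ≤ k → ∀ n, 0 < Γ k n :=
      fun k hk n => StrictAux.Γd_pos hfam w b hb hk (fun j h1 h2 => hwmem j h1) n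
    have hwn_lim : ∀ k, 1 ≤ k → Tendsto (fun n => nrm k (wn k n - w k)) atTop (nhds 0) := by
      intro k hk
      obtain ⟨j, rfl⟩ : ∃ j, k = j + 1 := ⟨k - 1, by omega⟩
      have hsp := (hgood j).alive_spec (hal (j+1))
      have T := hsp.2.2.2.2
      have hE : ∀ n, ∃ m, j ≤ n → (n ≤ m ∧ ψ n = (M (j+1)).phi m) := by
        intro n
        by_cases hjn : j ≤ n
        · obtain ⟨m, hm1, hm2⟩ := hψmem (j+1) n (by omega)
          exact ⟨m, fun _ => ⟨hm1, hm2⟩⟩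
        · exact ⟨0, fun h => absurd h hjn⟩
      choose e he using hE
      have heT : Tendsto e atTop atTop :=
        tendsto_atTop_mono' atTop (eventually_atTop.2 ⟨j, fun n hn => (he n hn).1⟩) tendsto_id
      refine (T.comp heT).congr' ?_
      filter_upwards [eventually_atTop.2 ⟨j, fun n hn => hn⟩] with n hn
      obtain ⟨hen, heψ⟩ := he n hn
      obtain ⟨hd, hne⟩ := hclaim j n hn
      have hΓd : Γ (j+1) n = nrm j ((M j).R (ψ n)) := by
        rw [hΓdef, StrictAux.Γd_def, hd, if_neg hne]
      have hwn : wn (j+1) n =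
          algebraMap ℝ 𝕜 ((nrm j ((M j).R ((M (j+1)).phi (e n))))⁻¹) •
            (M j).R ((M (j+1)).phi (e n)) := by
        rw [hwndef, StrictAux.wnd, ← hΓdef, hΓd]
        have h5 : StrictAux.dsq 𝕜 nrm w b (j + 1 - 1) n = (M j).R (ψ n) := hd
        rw [h5, heψ]
      simp only [Function.comp_apply]
      rw [hwn]
    have hΓ1eq : ∀ n, Γ 1 n = nrm 0 (v (ψ n) - L) := by
      intro n
      obtain ⟨hd, hne⟩ := hclaim 0 n (by omega)
      have hne' : StrictAux.dsq 𝕜 nrm w b 0 n ≠ 0 := by rw [hd]; exact hne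
      have h1 : Γ 1 n = if StrictAux.dsq 𝕜 nrm w b 0 n = 0 then 1
          else nrm 0 (StrictAux.dsq 𝕜 nrm w b 0 n) := rfl
      rw [h1, if_neg hne']
      rfl
    have hΓ1 : Tendsto (fun n => Γ 1 n) atTop (nhds 0) := by
      refine ((hvL.comp hψ.tendsto_atTop).congr ?_)
      intro n
      exact (hΓ1eq n).symm
    have hratio : ∀ k, 1 ≤ k → Tendsto (fun n => Γ (k+1) n / Γ k n) atTop (nhds 0) := by
      intro k hk
      refine (hwn_lim k hk).congr' ?_
      filter_upwards [eventually_atTop.2 ⟨k, fun n hn => hn⟩] with n hn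
      obtain ⟨hd, hne⟩ := hclaim k n hn
      have hne' : StrictAux.dsq 𝕜 nrm w b k n ≠ 0 := by rw [hd]; exact hne
      have hΓk1 : Γ (k+1) n = nrm k (StrictAux.dsq 𝕜 nrm w b k n) := by
        show StrictAux.Γd 𝕜 nrm w b (k+1) n = _
        rw [StrictAux.Γd_def, if_neg hne']
      have hfac := StrictAux.dsq_factor hfam w b hb hk (fun i h1 h2 => hwmem i h1) n
      have hsubmem : StrictAux.wnd 𝕜 nrm w b k n - w k ∈ Z k :=
        StrictAux.zsub hfam
          (StrictAux.zmono hfam (Nat.sub_le k 1)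
            (StrictAux.wnd_mem hfam w b hb (fun i h1 h2 => hwmem i h1) n))
          (hwmem k hk)
      have hnorm : nrm k (StrictAux.dsq 𝕜 nrm w b k n)
          = Γ k n * nrm k (wn k n - w k) := by
        rw [hfac, StrictAux.nrm_smul_real hfam _ hsubmem,
          abs_of_pos (hΓpos k hk n)]
      rw [hΓk1, hnorm, mul_div_cancel_left₀ _ (ne_of_gt (hΓpos k hk n))]
    have heq : ∀ k, 1 ≤ k → ∀ n, v (ψ n) =
        L + expPartialSum 𝕜 w Γ (k-1) n + algebraMap ℝ 𝕜 (Γ k n) • wn k n := by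
      intro k hk n
      have ht := StrictAux.dsq_telescope (𝕜 := 𝕜) (nrm := nrm) w b (k-1) n
      have hs := StrictAux.smul_wnd hfam w b hb hk (fun i h1 h2 => hwmem i h1) n
      show v (ψ n) = L + expPartialSum 𝕜 w (StrictAux.Γd 𝕜 nrm w b) (k-1) n +
        algebraMap ℝ 𝕜 (StrictAux.Γd 𝕜 nrm w b k n) • StrictAux.wnd 𝕜 nrm w b k n
      rw [hs, add_assoc, ← ht]
      have hbn : b n = v (ψ n) - L := rfl
      rw [hbn]
      abel
    have hunit : ∀ k, 1 ≤ k → ∀ n, k + 1 ≤ n → nrm (k-1) (wn k n) = 1 := by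
      intro k hk n hn
      refine StrictAux.wnd_norm_one hfam w b hb hk (fun i h1 h2 => hwmem i h1) n ?_
      obtain ⟨hd, hne⟩ := hclaim (k-1) n (by omega)
      rw [hd]; exact hne
    refine ⟨ψ, hψ, L, {k : ℕ | 1 ≤ k}, w, wn, Γ, fun k => k + 1, Or.inr (Or.inr ⟨rfl, ?_⟩)⟩
    refine ⟨hL, fun k hk => hwmem k hk,
      fun k hk n => StrictAux.wnd_mem hfam w b hb (fun i h1 h2 => hwmem i h1) n,
      fun k hk n => hΓpos k hk n, fun k _ => Nat.le_add_left 1 k, hΓ1,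
      fun k hk => hratio k hk, fun k hk => hwn_lim k hk,
      fun k hk n => heq k hk n, fun k hk n hn => hunit k hk n hn⟩
  · -- the process terminates: cases I and II
    have hex : ∃ k, (M k).dead = true := by
      by_contra hc
      push_neg at hc
      refine hal fun k => ?_
      have := hc k
      revert this; cases (M k).dead <;> simp
    have hKfd : (M (Nat.find hex)).dead = true := Nat.find_spec hex
    have hlt : ∀ j, j < Nat.find hex → (M j).dead = false := by
      intro j hj
      have := Nat.find_min hex hj
      revert this; cases (M j).dead <;> simp
    obtain ⟨k0, hk0⟩ : ∃ k0, Nat.find hex = k0 + 1 := by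
      refine ⟨Nat.find hex - 1, ?_⟩
      have hne0 : Nat.find hex ≠ 0 := by
        intro h0
        rw [h0, hM0d] at hKfd
        exact absurd hKfd (by simp)
      omega
    rw [hk0] at hKfd hlt
    have hk0alive : (M k0).dead = false := hlt k0 (by omega)
    obtain ⟨hRfreeze, hzero⟩ := (hgood k0).death_spec hk0alive hKfd
    set ψ : ℕ → ℕ := (M (k0+1)).phi with hψdef
    have hψ : StrictMono ψ := hphiSM (k0+1)
    rcases Nat.eq_zero_or_pos k0 with hk00 | hk0pos
    · -- Case I : the sequence is eventually constant
      subst hk00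
      refine ⟨ψ, hψ, L, ∅, fun _ => 0, fun _ _ => 0, fun _ _ => 0, fun _ => 0,
        Or.inl ⟨rfl, hL, fun n => ?_⟩⟩
      have h0 := hzero n
      rw [hM0R] at h0
      exact sub_eq_zero.mp h0
    · -- Case II : finite expansion with K0 = k0 terms
      set w : ℕ → E := fun j => (M j).w with hwdef
      set b : ℕ → E := fun n => v (ψ n) - L with hbdef
      have hb : ∀ n, b n ∈ Z 0 := fun n => StrictAux.zsub hfam (hv _) hL
      have hwmem : ∀ j, 1 ≤ j → j ≤ k0 → w j ∈ Z j := by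
        intro j h1 h2
        obtain ⟨j', rfl⟩ : ∃ j', j = j' + 1 := ⟨j - 1, by omega⟩
        exact ((hgood j').alive_spec (hlt (j'+1) (by omega))).2.1
      set Γ := StrictAux.Γd 𝕜 nrm w b with hΓdef
      set wn := StrictAux.wnd 𝕜 nrm w b with hwndef
      have hψmem : ∀ k, k ≤ k0 + 1 →
          ∃ g : ℕ → ℕ, (∀ m, m ≤ g m) ∧ ∀ n, ψ n = (M k).phi (g n) := by
        intro k hk
        obtain ⟨g, hg, heq2⟩ := hrefine k (k0+1) hk
        exact ⟨g, hg, fun n => congrFun heq2 n⟩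
      have hclaim : ∀ j, j ≤ k0 → ∀ n,
          StrictAux.dsq 𝕜 nrm w b j n = (M j).R (ψ n) ∧
            (j < k0 → (M j).R (ψ n) ≠ 0) := by
        intro j
        induction j with
        | zero =>
          intro _ n
          refine ⟨rfl, fun h0 => ?_⟩
          have hnz := ((hgood 0).alive_spec (hlt 1 (by omega))).2.2.2.1
          obtain ⟨g, hg, hgη⟩ := hψmem 1 (by omega)
          rw [hgη n]; exact hnz (g n)
        | succ j ih =>
          intro hj n
          obtain ⟨hd, hne⟩ := ih (by omega) n
          have hne' : StrictAux.dsq 𝕜 nrm w b j n ≠ 0 := by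
            rw [hd]; exact hne (by omega)
          have hrec := ((hgood j).alive_spec (hlt (j+1) (by omega))).2.2.1 (ψ n)
          have hΓd : StrictAux.Γd 𝕜 nrm w b (j+1) n = nrm j ((M j).R (ψ n)) := by
            rw [StrictAux.Γd_def, if_neg hne', hd]
          have h1 : StrictAux.dsq 𝕜 nrm w b (j+1) n = (M (j+1)).R (ψ n) := by
            rw [StrictAux.dsq_succ, hΓd, hd, hrec]
          refine ⟨h1, fun hjlt => ?_⟩
          have hnz := ((hgood (j+1)).alive_spec (hlt (j+2) (by omega))).2.2.2.1
          obtain ⟨g, hg, hgη⟩ := hψmem (j+2) (by omega)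
          rw [hgη n]; exact hnz (g n)
      have hΓpos : ∀ k, 1 ≤ k → k ≤ k0 → ∀ n, 0 < Γ k n := fun k h1 h2 n =>
        StrictAux.Γd_pos hfam w b hb h1 (fun i hi1 hi2 => hwmem i hi1 (by omega)) n
      have hwn_lim : ∀ k, 1 ≤ k → k ≤ k0 →
          Tendsto (fun n => nrm k (wn k n - w k)) atTop (nhds 0) := by
        intro k h1 h2
        obtain ⟨j, rfl⟩ : ∃ j, k = j + 1 := ⟨k - 1, by omega⟩
        have hsp := (hgood j).alive_spec (hlt (j+1) (by omega))
        have T := hsp.2.2.2.2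
        obtain ⟨g, hg, hgη⟩ := hψmem (j+1) (by omega)
        have heT : Tendsto g atTop atTop := tendsto_atTop_mono hg tendsto_id
        refine (T.comp heT).congr ?_
        intro n
        obtain ⟨hd, hne⟩ := hclaim j (by omega) n
        have hne' : StrictAux.dsq 𝕜 nrm w b j n ≠ 0 := by
          rw [hd]; exact hne (by omega)
        have hΓd : Γ (j+1) n = nrm j ((M j).R (ψ n)) := by
          show StrictAux.Γd 𝕜 nrm w b (j+1) n = _
          rw [StrictAux.Γd_def, if_neg hne', hd]
        have hwn : wn (j+1) n =
            algebraMap ℝ 𝕜 ((nrm j ((M j).R ((M (j+1)).phi (g n))))⁻¹) •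
              (M j).R ((M (j+1)).phi (g n)) := by
          rw [hwndef, StrictAux.wnd, ← hΓdef, hΓd]
          have h5 : StrictAux.dsq 𝕜 nrm w b (j + 1 - 1) n = (M j).R (ψ n) := hd
          rw [h5, hgη n]
        simp only [Function.comp_apply]
        rw [hwn]
      have hΓ1 : Tendsto (fun n => Γ 1 n) atTop (nhds 0) := by
        refine ((hvL.comp hψ.tendsto_atTop).congr ?_)
        intro n
        obtain ⟨hd, hne⟩ := hclaim 0 (by omega) n
        have hne' : StrictAux.dsq 𝕜 nrm w b 0 n ≠ 0 := by
          rw [hd]; exact hne (by omega)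
        have h1 : Γ 1 n = if StrictAux.dsq 𝕜 nrm w b 0 n = 0 then 1
            else nrm 0 (StrictAux.dsq 𝕜 nrm w b 0 n) := rfl
        rw [h1, if_neg hne']
        rfl
      have hratio : ∀ k, 1 ≤ k → k < k0 →
          Tendsto (fun n => Γ (k+1) n / Γ k n) atTop (nhds 0) := by
        intro k h1 h2
        refine (hwn_lim k h1 (by omega)).congr ?_
        intro n
        obtain ⟨hd, hne⟩ := hclaim k (by omega) n
        have hne' : StrictAux.dsq 𝕜 nrm w b k n ≠ 0 := by
          rw [hd]; exact hne h2
        have hΓk1 : Γ (k+1) n = nrm k (StrictAux.dsq 𝕜 nrm w b k n) := by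
          show StrictAux.Γd 𝕜 nrm w b (k+1) n = _
          rw [StrictAux.Γd_def, if_neg hne']
        have hfac := StrictAux.dsq_factor hfam w b hb h1
          (fun i hi1 hi2 => hwmem i hi1 (by omega)) n
        have hsubmem : StrictAux.wnd 𝕜 nrm w b k n - w k ∈ Z k :=
          StrictAux.zsub hfam
            (StrictAux.zmono hfam (Nat.sub_le k 1)
              (StrictAux.wnd_mem hfam w b hb (fun i hi1 hi2 => hwmem i hi1 (by omega)) n))
            (hwmem k h1 (by omega))
        have hnorm : nrm k (StrictAux.dsq 𝕜 nrm w b k n)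
            = Γ k n * nrm k (wn k n - w k) := by
          rw [hfac, StrictAux.nrm_smul_real hfam _ hsubmem,
            abs_of_pos (hΓpos k h1 (by omega) n)]
        rw [hΓk1, hnorm, mul_div_cancel_left₀ _ (ne_of_gt (hΓpos k h1 (by omega) n))]
      have hunit : ∀ k, 1 ≤ k → k ≤ k0 → ∀ n, nrm (k-1) (wn k n) = 1 := by
        intro k h1 h2 n
        refine StrictAux.wnd_norm_one hfam w b hb h1
          (fun i hi1 hi2 => hwmem i hi1 (by omega)) n ?_
        obtain ⟨hd, hne⟩ := hclaim (k-1) (by omega) n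
        rw [hd]; exact hne (by omega)
      have heq : ∀ k, 1 ≤ k → k ≤ k0 → ∀ n, v (ψ n) =
          L + expPartialSum 𝕜 w Γ (k-1) n + algebraMap ℝ 𝕜 (Γ k n) • wn k n := by
        intro k h1 h2 n
        have ht := StrictAux.dsq_telescope (𝕜 := 𝕜) (nrm := nrm) w b (k-1) n
        have hs := StrictAux.smul_wnd hfam w b hb h1
          (fun i hi1 hi2 => hwmem i hi1 (by omega)) n
        show v (ψ n) = L + expPartialSum 𝕜 w (StrictAux.Γd 𝕜 nrm w b) (k-1) n +
          algebraMap ℝ 𝕜 (StrictAux.Γd 𝕜 nrm w b k n) • StrictAux.wnd 𝕜 nrm w b k n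
        rw [hs, add_assoc, ← ht]
        have hbn : b n = v (ψ n) - L := rfl
        rw [hbn]
        abel
      have hlast : ∀ n, wn k0 n = w k0 := by
        intro n
        have hdk0 : StrictAux.dsq 𝕜 nrm w b k0 n = 0 := by
          rw [(hclaim k0 le_rfl n).1]; exact hzero n
        have hfac := StrictAux.dsq_factor hfam w b hb hk0pos
          (fun i hi1 hi2 => hwmem i hi1 (by omega)) n
        have hpos := hΓpos k0 hk0pos le_rfl n
        have h3 : algebraMap ℝ 𝕜 ((Γ k0 n)⁻¹) •
            (algebraMap ℝ 𝕜 (Γ k0 n) • (StrictAux.wnd 𝕜 nrm w b k0 n - w k0)) = 0 := by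
          rw [← hΓdef] at hfac
          rw [← hfac, hdk0, smul_zero]
        rw [smul_smul, ← map_mul, inv_mul_cancel₀ (ne_of_gt hpos), map_one, one_smul]
          at h3
        have := sub_eq_zero.mp h3
        exact this
      refine ⟨ψ, hψ, L, Set.Icc 1 k0, w, wn, Γ, fun _ => 1,
        Or.inr (Or.inl ⟨k0, rfl, ?_⟩)⟩
      exact ⟨hk0pos, hL, fun k h1 h2 => hwmem k h1 h2,
        fun k h1 h2 n => StrictAux.wnd_mem hfam w b hb
          (fun i hi1 hi2 => hwmem i hi1 (by omega)) n,
        fun k h1 h2 n => hΓpos k h1 h2 n, hΓ1,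
        fun k h1 h2 => hratio k h1 h2, fun k h1 h2 => hwn_lim k h1 h2,
        fun k h1 h2 n => hunit k h1 h2 n, fun k h1 h2 n => heq k h1 h2 n,
        hlast⟩
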